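/- Let k be a field of characteristic p > 0, q a power of p, and R a k-algebra. Regard k and R as difference rings via σ(x) = x^q. Then R is σ-separable over k (i.e. R ⊗_k K is σ-reduced for every σ-field extension K of k) if and only if R is a separable k-algebra (i.e. R ⊗_k K is reduced for every field extension K of k). -/

import Mathlib

open TensorProduct

/-- The diagonal endomorphism `σ(a ⊗ b) = σ(a) ⊗ σ(b)` of `A ⊗_k B` is injective
(i.e. `A ⊗_k B` is σ-reduced): any ring endomorphism satisfying the defining rule
on pure tensors is injective. -/
def SigmaReducedTensor (k A B : Type) [CommRing k] [CommRing A] [CommRing B]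
    [Algebra k A] [Algebra k B] (σA : A →+* A) (σB : B →+* B) : Prop :=
  ∀ τ : (A ⊗[k] B) →+* A ⊗[k] B,
    (∀ (a : A) (b : B), τ (a ⊗ₜ[k] b) = σA a ⊗ₜ[k] σB b) → Function.Injective τ

/-- A `k`-σ-algebra `R` is σ-separable over `k` if `R ⊗_k K` is σ-reduced for
every difference field extension `K` of `k`. -/
def IsSigmaSeparable (k R : Type) [Field k] [CommRing R] [Algebra k R]
    (σk : k →+* k) (σR : R →+* R) : Prop :=
  ∀ (K : Type) [Field K] [Algebra k K], ∀ σK : K →+* K,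
    (∀ x : k, σK (algebraMap k K x) = algebraMap k K (σk x)) →
    SigmaReducedTensor k K R σK σR

/-- Type synonym used to endow a field `K` with a twisted `k`-algebra structure. -/
def TwAux (K : Type) : Type := K

/-- For `k` of characteristic `p > 0`, `q` a power of `p`, and σ the `q`-power
Frobenius, a `k`-algebra `R` is σ-separable over `k` iff it is a separable
`k`-algebra (i.e. `R ⊗_k K` is reduced for every field extension `K|k`). -/
theorem strongly_etale_stmt3
    (k R : Type) [Field k] [CommRing R] [Algebra k R]
    (p q : ℕ) (hp : p.Prime) [CharP k p]
    (hq : ∃ m : ℕ, 0 < m ∧ q = p ^ m)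
    (σk : k →+* k) (σR : R →+* R)
    (hσk : ∀ x : k, σk x = x ^ q)
    (hσR : ∀ x : R, σR x = x ^ q) :
    IsSigmaSeparable k R σk σR ↔
      (∀ (K : Type) [Field K] [Algebra k K], IsReduced (K ⊗[k] R)) := by
  obtain ⟨m, hm, hqm⟩ := hq
  haveI : Fact p.Prime := ⟨hp⟩
  have hq1 : 1 < q := by
    rw [hqm]; exact Nat.one_lt_pow hm.ne' hp.one_lt
  constructor
  · -- σ-separable → separable
    intro h K _ _
    haveI : CharP K p := charP_of_injective_algebraMap (algebraMap k K).injective p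
    haveI : ExpChar K p := .prime hp
    have hcomp : ∀ x : k,
        (iterateFrobenius K p m) (algebraMap k K x) = algebraMap k K (σk x) := by
      intro x
      rw [iterateFrobenius_def, hσk, ← hqm, map_pow]
    have hsr := h K (iterateFrobenius K p m) hcomp
    rcases subsingleton_or_nontrivial (K ⊗[k] R) with hs | hnt
    · exact ⟨fun x _ => Subsingleton.elim x 0⟩
    · haveI : CharP (K ⊗[k] R) p :=
        charP_of_injective_ringHom (algebraMap K (K ⊗[k] R)).injective p
      haveI : ExpChar (K ⊗[k] R) p := .prime hp
      set τ := iterateFrobenius (K ⊗[k] R) p m with hτdef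
      have hτq : ∀ y : K ⊗[k] R, τ y = y ^ q := by
        intro y; rw [hτdef, iterateFrobenius_def, ← hqm]
      have hrule : ∀ (a : K) (b : R),
          τ (a ⊗ₜ[k] b) = (iterateFrobenius K p m) a ⊗ₜ[k] σR b := by
        intro a b
        rw [hσR, hτq, iterateFrobenius_def, ← hqm, Algebra.TensorProduct.tmul_pow]
      have hinj := hsr τ hrule
      refine ⟨fun x hx => ?_⟩
      obtain ⟨n, hn⟩ := hx
      have hiter : ∀ (t : ℕ) (y : K ⊗[k] R), τ^[t] y = y ^ q ^ t := by
        intro t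
        induction t with
        | zero => intro y; simp
        | succ t ih =>
          intro y
          rw [Function.iterate_succ_apply, ih, hτq, ← pow_mul, ← pow_succ']
      have hxqn : x ^ q ^ n = 0 :=
        pow_eq_zero_of_le (le_of_lt (Nat.lt_pow_self (n := n) hq1)) hn
      refine (hinj.iterate n) (a₁ := x) (a₂ := 0) ?_
      rw [hiter, hiter, hxqn, zero_pow (by positivity : q ^ n ≠ 0)]
  · -- separable → σ-separable
    intro h K _ _ σK hσKk τ hτ
    rcases subsingleton_or_nontrivial R with hsR | hntR
    · haveI : Subsingleton (K ⊗[k] R) := by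
        constructor
        intro a b
        have hz : ∀ z : K ⊗[k] R, z = 0 := by
          intro z
          induction z using TensorProduct.induction_on with
          | zero => rfl
          | tmul a b => rw [Subsingleton.elim b 0, TensorProduct.tmul_zero]
          | add x y hx hy => rw [hx, hy, add_zero]
        rw [hz a, hz b]
      exact fun a b _ => Subsingleton.elim a b
    · haveI : CharP K p := charP_of_injective_algebraMap (algebraMap k K).injective p
      letI : Field (TwAux K) := ‹Field K›
      letI : Algebra k (TwAux K) := ((algebraMap k K).comp σk).toAlgebra
      haveI : CharP (TwAux K) p := inferInstanceAs (CharP K p)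
      -- Nontriviality of the twisted tensor product
      have bR := Module.Free.chooseBasis k R
      haveI : Nonempty (Module.Free.ChooseBasisIndex k R) := bR.index_nonempty
      obtain ⟨i⟩ := ‹Nonempty (Module.Free.ChooseBasisIndex k R)›
      haveI : Nontrivial (TwAux K ⊗[k] R) :=
        nontrivial_of_ne _ _ ((Algebra.TensorProduct.basis (TwAux K) bR).ne_zero i)
      haveI : CharP (TwAux K ⊗[k] R) p :=
        charP_of_injective_ringHom (algebraMap (TwAux K) (TwAux K ⊗[k] R)).injective p
      -- the two k-linear maps K → TwAux K
      let Φl : K →ₗ[k] TwAux K :=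
        { toFun := fun a => (σK a : K)
          map_add' := fun a b => map_add σK a b
          map_smul' := fun c a => by
            show σK (c • a) = algebraMap k K (σk c) * σK a
            rw [Algebra.smul_def, map_mul, hσKk] }
      let Fl : K →ₗ[k] TwAux K :=
        { toFun := fun a => (a ^ q : K)
          map_add' := fun a b => by
            show (a + b) ^ q = a ^ q + b ^ q
            rw [hqm, add_pow_char_pow]
          map_smul' := fun c a => by
            show (c • a) ^ q = algebraMap k K (σk c) * a ^ q
            rw [Algebra.smul_def, mul_pow, ← map_pow, ← hσk] }
      let Φ := LinearMap.rTensor (M := R) Φl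
      let F := LinearMap.rTensor (M := R) Fl
      have key : ∀ z : K ⊗[k] R, (Φ z) ^ q = F (τ z) := by
        intro z
        induction z using TensorProduct.induction_on with
        | zero =>
          rw [map_zero, map_zero, map_zero, zero_pow (by positivity : q ≠ 0)]
        | tmul a b =>
          rw [hτ a b, hσR]
          show (LinearMap.rTensor (M := R) Φl (a ⊗ₜ[k] b)) ^ q
              = LinearMap.rTensor (M := R) Fl (σK a ⊗ₜ[k] (b ^ q))
          rw [LinearMap.rTensor_tmul, LinearMap.rTensor_tmul,
            Algebra.TensorProduct.tmul_pow]
          rfl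
        | add x y hx hy =>
          rw [map_add, map_add, map_add, hqm, add_pow_char_pow, ← hqm, hx, hy]
      intro z₁ z₂ hz
      have h0 : τ (z₁ - z₂) = 0 := by rw [map_sub, hz, sub_self]
      have hnil : (Φ (z₁ - z₂)) ^ q = 0 := by rw [key, h0, map_zero]
      haveI : IsReduced (TwAux K ⊗[k] R) := h (TwAux K)
      have hker : Φ (z₁ - z₂) = 0 := IsReduced.eq_zero _ ⟨q, hnil⟩
      have hΦinj : Function.Injective Φ :=
        Module.Flat.rTensor_preserves_injective_linearMap Φl
          (fun a b hab => σK.injective hab)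
      have := hΦinj (by rw [hker, map_zero] : Φ (z₁ - z₂) = Φ 0)
      exact sub_eq_zero.mp this
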